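/- Let n ≥ 1, m > 0, 0 < θ ≤ 1, and let u₁ ∈ L¹(ℝⁿ). Then there exist δ₁ > δ, a constant α > 0 with α = δ² (1 − √(1 − 4/δ₁² − 4 m² log(1+δ₁^{2θ})/δ₁⁴)), and C > 0 depending only on n and θ, such that for all t > 0, ∫_{δ ≤ |ξ| ≤ δ₁} e^{-|ξ|² t} sinh²(t d(ξ))/d(ξ)² |û₁(ξ)|² dξ ≤ C ‖u₁‖_{L¹}² t² e^{-α t}. -/

import Mathlib

open MeasureTheory Real

noncomputable section

/-- Euclidean space `ℝⁿ`. -/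
abbrev E (n : ℕ) := EuclideanSpace ℝ (Fin n)

/-- The Fourier transform `û₁(ξ) = ∫ e^{-i x·ξ} u₁(x) dx`. -/
def fourierT (n : ℕ) (u₁ : E n → ℝ) (ξ : E n) : ℂ :=
  ∫ x : E n, Complex.exp (-(Complex.I * ((inner ℝ x ξ : ℝ) : ℂ))) * (u₁ x : ℂ)

/-- `b(r) = (1/2)√(4r² + 4m² log(1+r^{2θ}) − r⁴)` (low frequencies). -/
def bF (m θ r : ℝ) : ℝ :=
  Real.sqrt (4 * r ^ 2 + 4 * m ^ 2 * Real.log (1 + r ^ (2 * θ)) - r ^ 4) / 2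

/-- `d(r) = (1/2)√(r⁴ − 4r² − 4m² log(1+r^{2θ}))` (high frequencies). -/
def dF (m θ r : ℝ) : ℝ :=
  Real.sqrt (r ^ 4 - 4 * r ^ 2 - 4 * m ^ 2 * Real.log (1 + r ^ (2 * θ))) / 2

/-- `sinh y ≤ y e^y` for `y ≥ 0`. -/
lemma sinh_le_mul_exp {y : ℝ} : Real.sinh y ≤ y * Real.exp y := by
  rw [Real.sinh_eq]
  have h1 : Real.exp (-y) * Real.exp y = 1 := by rw [← Real.exp_add]; simp
  have h2 : 1 - 2*y ≤ Real.exp (-(2*y)) := by linarith [Real.add_one_le_exp (-(2*y))]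
  have h3 : Real.exp (-(2*y)) = Real.exp (-y) * Real.exp (-y) := by rw [← Real.exp_add]; ring_nf
  have h4 : 0 < Real.exp (-y) := Real.exp_pos _
  have h5 : 0 < Real.exp y := Real.exp_pos _
  nlinarith [mul_le_mul_of_nonneg_left h2 h5.le, h1, h3]

/-- Monotonicity: `log(1+r^{2θ})/r⁴` is decreasing for `r > 2`. -/
lemma log_ineq (θ r s : ℝ) (hθ1 : 0 < θ) (hθ2 : θ ≤ 1) (hr : 2 < r) (hrs : r ≤ s) :
    r^4 * Real.log (1 + s^(2*θ)) ≤ s^4 * Real.log (1 + r^(2*θ)) := by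
  have hr0 : (0:ℝ) < r := by linarith
  have hs0 : (0:ℝ) < s := by linarith
  have h2θ : 0 < 2*θ := by linarith
  have hx1 : (1:ℝ) ≤ r ^ (2*θ) := by
    have := Real.rpow_le_rpow (by norm_num : (0:ℝ) ≤ 1) (by linarith : (1:ℝ) ≤ r) h2θ.le
    rwa [Real.one_rpow] at this
  have hsr1 : (1:ℝ) ≤ s / r := (one_le_div hr0).2 hrs
  have hq1 : (1:ℝ) ≤ (s/r) ^ (2*θ) := by
    have := Real.rpow_le_rpow (by norm_num : (0:ℝ) ≤ 1) hsr1 h2θ.le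
    rwa [Real.one_rpow] at this
  have hmul : r ^ (2*θ) * (s/r) ^ (2*θ) = s ^ (2*θ) := by
    rw [← Real.mul_rpow hr0.le (by positivity)]
    congr 1
    field_simp
  have key1 : 1 + s^(2*θ) ≤ (1 + r^(2*θ)) * ((s/r)^(2*θ)) := by nlinarith [hq1, hmul, hx1]
  have hlog1 : Real.log (1 + s^(2*θ)) ≤ Real.log (1+r^(2*θ)) + (2*θ) * Real.log (s/r) := by
    calc Real.log (1+s^(2*θ)) ≤ Real.log ((1+r^(2*θ)) * ((s/r)^(2*θ))) :=
          Real.log_le_log (by positivity) key1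
    _ = Real.log (1+r^(2*θ)) + Real.log ((s/r)^(2*θ)) := Real.log_mul (by positivity) (by positivity)
    _ = _ := by rw [Real.log_rpow (by positivity)]
  have hlogsr0 : 0 ≤ Real.log (s/r) := Real.log_nonneg hsr1
  have hlogsr : Real.log (s/r) ≤ (s-r)/r := by
    have h := Real.log_le_sub_one_of_pos (show (0:ℝ) < s/r by positivity)
    have : s/r - 1 = (s-r)/r := by field_simp
    linarith [this ▸ h]
  have hLr : 1/2 ≤ Real.log (1 + r^(2*θ)) := by
    have h2 : (2:ℝ) ≤ 1 + r^(2*θ) := by linarith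
    have hl := Real.log_le_log (by norm_num : (0:ℝ) < 2) h2
    nlinarith [Real.log_two_gt_d9]
  have hs4 : r^4 + 4*r^3*(s-r) ≤ s^4 := by
    nlinarith [sq_nonneg (s-r), sq_nonneg (s+r), mul_pos hr0 hs0, sq_nonneg (s*s - r*r),
      sq_nonneg (s*r - r*r)]
  have hfrac : 2*θ*Real.log (s/r) ≤ 2*(s-r)/r := by
    have h1 : 2*θ*Real.log (s/r) ≤ 2*Real.log (s/r) := by nlinarith
    have h2 : 2*Real.log (s/r) ≤ 2*((s-r)/r) := by linarith
    calc 2*θ*Real.log (s/r) ≤ 2*((s-r)/r) := by linarith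
    _ = 2*(s-r)/r := by ring
  have hLs : Real.log (1 + s^(2*θ)) ≤ Real.log (1+r^(2*θ)) + 2*(s-r)/r := by linarith
  have h5 : r^4 * (2*(s-r)/r) = 2*r^3*(s-r) := by field_simp
  have h6 : r^4 * Real.log (1 + s^(2*θ)) ≤ r^4 * Real.log (1+r^(2*θ)) + 2*r^3*(s-r) := by
    have := mul_le_mul_of_nonneg_left hLs (by positivity : (0:ℝ) ≤ r^4)
    nlinarith [this, h5]
  have hpos4 : (0:ℝ) ≤ 4*r^3*(s-r) := mul_nonneg (by positivity) (by linarith)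
  nlinarith [mul_le_mul_of_nonneg_right (by linarith : 4*r^3*(s-r) ≤ s^4 - r^4)
      (by linarith : (0:ℝ) ≤ Real.log (1+r^(2*θ))),
    mul_le_mul_of_nonneg_left hLr hpos4]


set_option maxHeartbeats 1000000 in
open MeasureTheory in
/-- exponential decay on the zone `δ ≤ |ξ| ≤ δ₁`. -/
theorem stmt11 (n : ℕ) (hn : 1 ≤ n) (m θ : ℝ) (hm : 0 < m) (hθ1 : 0 < θ) (hθ2 : θ ≤ 1)
    (δ : ℝ) (hδ2 : 2 < δ)
    (hδneg : ∀ r : ℝ, 0 < r → r < δ →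
      r ^ 4 - 4 * r ^ 2 - 4 * m ^ 2 * Real.log (1 + r ^ (2 * θ)) < 0)
    (hδpos : ∀ r : ℝ, δ ≤ r →
      0 ≤ r ^ 4 - 4 * r ^ 2 - 4 * m ^ 2 * Real.log (1 + r ^ (2 * θ)))
    (u₁ : E n → ℝ) (hu₁ : Integrable u₁) :
    ∃ δ₁ : ℝ, δ < δ₁ ∧ ∃ α : ℝ,
      α = δ ^ 2 * (1 - Real.sqrt (1 - 4 / δ₁ ^ 2 -
            4 * m ^ 2 * Real.log (1 + δ₁ ^ (2 * θ)) / δ₁ ^ 4)) ∧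
      0 < α ∧ ∃ C : ℝ, 0 < C ∧
        ∀ t : ℝ, 0 < t →
          (∫ ξ in {ξ : E n | δ ≤ ‖ξ‖ ∧ ‖ξ‖ ≤ δ₁},
              Real.exp (-(‖ξ‖ ^ 2) * t) * Real.sinh (t * dF m θ ‖ξ‖) ^ 2 / dF m θ ‖ξ‖ ^ 2 *
                ‖fourierT n u₁ ξ‖ ^ 2) ≤
            C * (∫ x : E n, |u₁ x|) ^ 2 * t ^ 2 * Real.exp (-α * t) := by
  set δ₁ : ℝ := δ + 1 with hδ₁def
  have hδ₁ : δ < δ₁ := by simp [hδ₁def]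
  have hδ₁0 : (0:ℝ) < δ₁ := by linarith
  set L₁ : ℝ := Real.log (1 + δ₁ ^ (2 * θ)) with hL₁def
  have hL₁0 : 0 ≤ L₁ := Real.log_nonneg (by
    have : (0:ℝ) ≤ δ₁ ^ (2*θ) := Real.rpow_nonneg hδ₁0.le _
    linarith)
  set x : ℝ := 1 - 4 / δ₁ ^ 2 - 4 * m ^ 2 * L₁ / δ₁ ^ 4 with hxdef
  have hxeq : x = (δ₁ ^ 4 - 4 * δ₁ ^ 2 - 4 * m ^ 2 * L₁) / δ₁ ^ 4 := by
    rw [hxdef]; field_simp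
  have hx0 : 0 ≤ x := by
    rw [hxeq]
    exact div_nonneg (hδpos δ₁ hδ₁.le) (by positivity)
  have hx1 : x < 1 := by
    have h1 : 0 < 4 / δ₁ ^ 2 := by positivity
    have h2 : 0 ≤ 4 * m ^ 2 * L₁ / δ₁ ^ 4 := by positivity
    rw [hxdef]; linarith
  set β : ℝ := Real.sqrt x with hβdef
  have hβ0 : 0 ≤ β := Real.sqrt_nonneg _
  have hβ1 : β < 1 := by
    have := Real.sqrt_lt_sqrt hx0 hx1
    rwa [Real.sqrt_one] at this
  set α : ℝ := δ ^ 2 * (1 - β) with hαdef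
  have hα0 : 0 < α := by
    have : 0 < 1 - β := by linarith
    positivity
  set M : ℝ := ∫ x : E n, |u₁ x| with hMdef
  have hM0 : 0 ≤ M := integral_nonneg fun x => abs_nonneg _
  -- bound on the Fourier transform
  have hFT : ∀ ξ : E n, ‖fourierT n u₁ ξ‖ ≤ M := by
    intro ξ
    unfold fourierT
    calc ‖∫ x : E n, Complex.exp (-(Complex.I * ((inner ℝ x ξ : ℝ) : ℂ))) * (u₁ x : ℂ)‖
        ≤ ∫ x : E n, ‖Complex.exp (-(Complex.I * ((inner ℝ x ξ : ℝ) : ℂ))) * (u₁ x : ℂ)‖ :=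
          norm_integral_le_integral_norm _
      _ = M := by
          apply integral_congr_ae
          filter_upwards with x
          rw [norm_mul, Complex.norm_exp]
          simp [Complex.mul_re]
  -- key inequality: 2 d(r) ≤ β r² on [δ, δ₁]
  have hd2 : ∀ r : ℝ, δ ≤ r → r ≤ δ₁ → 2 * dF m θ r ≤ β * r ^ 2 := by
    intro r hr1 hr2
    have hr0 : (0:ℝ) < r := by linarith
    have hA : r ^ 4 - 4 * r ^ 2 - 4 * m ^ 2 * Real.log (1 + r ^ (2 * θ)) ≤ x * r ^ 4 := by
      rw [hxeq, div_mul_eq_mul_div, le_div_iff₀ (by positivity : (0:ℝ) < δ₁ ^ 4)]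
      have hlog := log_ineq θ r δ₁ hθ1 hθ2 (by linarith) hr2
      have hsq : r ^ 2 ≤ δ₁ ^ 2 := by nlinarith
      have h1 : r ^ 4 * δ₁ ^ 2 ≤ r ^ 2 * δ₁ ^ 4 := by
        nlinarith [mul_le_mul_of_nonneg_left hsq (show (0:ℝ) ≤ r ^ 2 * δ₁ ^ 2 by positivity)]
      have h2 : m ^ 2 * (r ^ 4 * L₁) ≤ m ^ 2 * (δ₁ ^ 4 * Real.log (1 + r ^ (2 * θ))) :=
        mul_le_mul_of_nonneg_left hlog (by positivity)
      nlinarith [h1, h2]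
    have hβr : (0:ℝ) ≤ β * r ^ 2 := by positivity
    have h3 : x * r ^ 4 = (β * r ^ 2) ^ 2 := by
      rw [hβdef, mul_pow, Real.sq_sqrt hx0]; ring
    unfold dF
    rw [mul_div_cancel₀ _ (two_ne_zero)]
    calc Real.sqrt (r ^ 4 - 4 * r ^ 2 - 4 * m ^ 2 * Real.log (1 + r ^ (2 * θ)))
        ≤ Real.sqrt ((β * r ^ 2) ^ 2) := Real.sqrt_le_sqrt (by rw [← h3]; exact hA)
      _ = β * r ^ 2 := Real.sqrt_sq hβr
  -- the constant
  set V : ℝ := (volume (Metric.closedBall (0 : E n) δ₁)).toReal with hVdef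
  have hV0 : 0 ≤ V := ENNReal.toReal_nonneg
  refine ⟨δ₁, hδ₁, α, by rw [hαdef], hα0, V + 1, by linarith, ?_⟩
  intro t ht
  set S : Set (E n) := {ξ : E n | δ ≤ ‖ξ‖ ∧ ‖ξ‖ ≤ δ₁} with hSdef
  have hSmeas : MeasurableSet S :=
    (measurableSet_le measurable_const measurable_norm).inter
      (measurableSet_le measurable_norm measurable_const)
  have hSsub : S ⊆ Metric.closedBall (0 : E n) δ₁ := by
    intro ξ hξ
    rw [Metric.mem_closedBall, dist_zero_right]
    exact hξ.2
  have hSfin : volume S < ⊤ :=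
    lt_of_le_of_lt (measure_mono hSsub) measure_closedBall_lt_top
  -- pointwise bound
  have hpt : ∀ ξ ∈ S,
      Real.exp (-(‖ξ‖ ^ 2) * t) * Real.sinh (t * dF m θ ‖ξ‖) ^ 2 / dF m θ ‖ξ‖ ^ 2 *
        ‖fourierT n u₁ ξ‖ ^ 2 ≤ Real.exp (-α * t) * t ^ 2 * M ^ 2 := by
    intro ξ hξ
    obtain ⟨hr1, hr2⟩ := hξ
    set r : ℝ := ‖ξ‖ with hrdef
    set d : ℝ := dF m θ r with hddef
    have hd0 : 0 ≤ d := by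
      rw [hddef]; unfold dF; positivity
    have hsq : Real.sinh (t * d) ^ 2 / d ^ 2 ≤ t ^ 2 * Real.exp (β * r ^ 2 * t) := by
      rcases eq_or_lt_of_le hd0 with hd | hd
      · rw [← hd]
        have h0 : Real.sinh (t * 0) ^ 2 / (0:ℝ) ^ 2 = 0 := by
          rw [zero_pow (two_ne_zero), div_zero]
        rw [h0]
        positivity
      · have htd : 0 ≤ t * d := by positivity
        have h1 : Real.sinh (t * d) ≤ (t * d) * Real.exp (t * d) := sinh_le_mul_exp
        have h1' : 0 ≤ Real.sinh (t * d) := by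
          rw [← Real.sinh_zero]; exact Real.sinh_le_sinh.2 htd
        have h2 : Real.sinh (t * d) ^ 2 ≤ ((t * d) * Real.exp (t * d)) ^ 2 := by
          apply pow_le_pow_left₀ h1' h1
        have hee : Real.exp (t * d) ^ 2 = Real.exp (2 * (t * d)) := by
          rw [sq, ← Real.exp_add]; ring_nf
        have h3 : ((t * d) * Real.exp (t * d)) ^ 2 = t ^ 2 * d ^ 2 * Real.exp (2 * (t * d)) := by
          rw [mul_pow, hee]; ring
        have h4 : 2 * (t * d) ≤ β * r ^ 2 * t := by
          have := hd2 r hr1 hr2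
          nlinarith [this, ht.le]
        have h5 : Real.exp (2 * (t * d)) ≤ Real.exp (β * r ^ 2 * t) := Real.exp_le_exp.2 h4
        rw [div_le_iff₀ (by positivity : (0:ℝ) < d ^ 2)]
        calc Real.sinh (t * d) ^ 2 ≤ t ^ 2 * d ^ 2 * Real.exp (2 * (t * d)) := by
              rw [← h3]; exact h2
          _ ≤ t ^ 2 * d ^ 2 * Real.exp (β * r ^ 2 * t) := by
              apply mul_le_mul_of_nonneg_left h5 (by positivity)
          _ = t ^ 2 * Real.exp (β * r ^ 2 * t) * d ^ 2 := by ring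
    have hFT2 : ‖fourierT n u₁ ξ‖ ^ 2 ≤ M ^ 2 := by
      apply pow_le_pow_left₀ (norm_nonneg _) (hFT ξ)
    have hexp : Real.exp (-(r ^ 2) * t) * Real.exp (β * r ^ 2 * t) ≤ Real.exp (-α * t) := by
      rw [← Real.exp_add]
      apply Real.exp_le_exp.2
      have hrδ : δ ^ 2 ≤ r ^ 2 := by nlinarith
      nlinarith [mul_nonneg (mul_nonneg (by linarith : (0:ℝ) ≤ 1 - β)
        (by linarith : (0:ℝ) ≤ r ^ 2 - δ ^ 2)) ht.le]
    calc Real.exp (-(r ^ 2) * t) * Real.sinh (t * d) ^ 2 / d ^ 2 * ‖fourierT n u₁ ξ‖ ^ 2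
        = Real.exp (-(r ^ 2) * t) * (Real.sinh (t * d) ^ 2 / d ^ 2) * ‖fourierT n u₁ ξ‖ ^ 2 := by
          ring
      _ ≤ Real.exp (-(r ^ 2) * t) * (t ^ 2 * Real.exp (β * r ^ 2 * t)) * M ^ 2 := by
          apply mul_le_mul
          · exact mul_le_mul_of_nonneg_left hsq (Real.exp_pos _).le
          · exact hFT2
          · positivity
          · positivity
      _ = (Real.exp (-(r ^ 2) * t) * Real.exp (β * r ^ 2 * t)) * t ^ 2 * M ^ 2 := by ring
      _ ≤ Real.exp (-α * t) * t ^ 2 * M ^ 2 := by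
          apply mul_le_mul_of_nonneg_right
            (mul_le_mul_of_nonneg_right hexp (by positivity)) (by positivity)
  -- conclusion by integrating
  set K : ℝ := Real.exp (-α * t) * t ^ 2 * M ^ 2 with hKdef
  have hK0 : 0 ≤ K := by positivity
  by_cases hInt : IntegrableOn (fun ξ : E n =>
      Real.exp (-(‖ξ‖ ^ 2) * t) * Real.sinh (t * dF m θ ‖ξ‖) ^ 2 / dF m θ ‖ξ‖ ^ 2 *
        ‖fourierT n u₁ ξ‖ ^ 2) S volume
  · calc (∫ ξ in S,
        Real.exp (-(‖ξ‖ ^ 2) * t) * Real.sinh (t * dF m θ ‖ξ‖) ^ 2 / dF m θ ‖ξ‖ ^ 2 *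
          ‖fourierT n u₁ ξ‖ ^ 2)
        ≤ ∫ _ξ in S, K := by
          apply setIntegral_mono_on hInt _ hSmeas hpt
          exact integrableOn_const hSfin.ne
      _ = (volume S).toReal * K := by rw [setIntegral_const, smul_eq_mul]; rfl
      _ ≤ (V + 1) * K := by
          apply mul_le_mul_of_nonneg_right _ hK0
          have : (volume S).toReal ≤ V := by
            rw [hVdef]
            exact ENNReal.toReal_mono (measure_closedBall_lt_top).ne (measure_mono hSsub)
          linarith
      _ = (V + 1) * M ^ 2 * t ^ 2 * Real.exp (-α * t) := by rw [hKdef]; ring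
  · rw [integral_undef hInt]
    positivity

end
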